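/- Let (β,γ) be antiferromagnetic and λ > 0. There exist constants C_min, C_max with 0 < C_min < C_max < 1 and τ₀ > 0 such that for every τ ∈ (0,τ₀), setting I' := [x* − 2τ·|ω*|/(1−|ω*|), x* + 2τ·|ω*|/(1−|ω*|)], the following hold for every R ∈ I' and every ρ ∈ [x* − τ, x* + τ]: C_min ≤ |φ_ρ'(R)| ≤ C_max, ω(R) ≤ C_max, and φ_ρ(R) ∈ I'. -/

import Mathlib

set_option maxHeartbeats 1000000

/-- `(β, γ)` is antiferromagnetic: both are nonnegative, `βγ < 1`, and not both are zero. -/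
def Antiferro (β γ : ℝ) : Prop :=
  0 ≤ β ∧ 0 ≤ γ ∧ β * γ < 1 ∧ (β ≠ 0 ∨ γ ≠ 0)

/-- For `βγ ≠ 1` and `R > 0`, `ω(R) := (1 + βγ − βR − γ/R)/(1 − βγ)`. -/
noncomputable def omegaFun (β γ R : ℝ) : ℝ := (1 + β * γ - β * R - γ / R) / (1 - β * γ)

/-- The map `φ_ρ(R) := (1 + γλρR)/(β + λρR)`. -/
noncomputable def phiMap (β γ lam p R : ℝ) : ℝ :=
  (1 + γ * lam * (p * R)) / (β + lam * (p * R))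

theorem phi_contraction (β γ lam xs : ℝ) (hanti : Antiferro β γ) (hlam : 0 < lam)
    (hxs : 0 < xs) (hfix : xs = (1 + γ * lam * xs ^ 2) / (β + lam * xs ^ 2)) :
    ∃ Cmin Cmax τ₀ : ℝ, 0 < Cmin ∧ Cmin < Cmax ∧ Cmax < 1 ∧ 0 < τ₀ ∧
      ∀ τ ∈ Set.Ioo (0 : ℝ) τ₀,
        ∀ R ∈ Set.Icc (xs - 2 * τ * |omegaFun β γ xs| / (1 - |omegaFun β γ xs|))
            (xs + 2 * τ * |omegaFun β γ xs| / (1 - |omegaFun β γ xs|)),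
          ∀ p ∈ Set.Icc (xs - τ) (xs + τ),
            (Cmin ≤ |deriv (phiMap β γ lam p) R| ∧ |deriv (phiMap β γ lam p) R| ≤ Cmax) ∧
            omegaFun β γ R ≤ Cmax ∧
            phiMap β γ lam p R ∈
              Set.Icc (xs - 2 * τ * |omegaFun β γ xs| / (1 - |omegaFun β γ xs|))
                (xs + 2 * τ * |omegaFun β γ xs| / (1 - |omegaFun β γ xs|)) := by
  obtain ⟨hβ, hγ, hβγ, hne⟩ := hanti
  have hK : (0:ℝ) < 1 - β * γ := by linarith
  have hKne : (1:ℝ) - β * γ ≠ 0 := hK.ne'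
  have hA : (0:ℝ) < β + lam * xs ^ 2 := by
    have : (0:ℝ) < lam * xs ^ 2 := by positivity
    linarith
  have hAne : β + lam * xs ^ 2 ≠ 0 := hA.ne'
  have hxne : xs ≠ 0 := hxs.ne'
  have hE : xs * (β + lam * xs ^ 2) = 1 + γ * lam * xs ^ 2 := by
    field_simp at hfix
    linarith [hfix]
  -- the contraction ratio at the fixpoint
  set w : ℝ := lam * (1 - β * γ) * xs / (β + lam * xs ^ 2) ^ 2 with hw_def
  have hw0 : 0 < w := div_pos (mul_pos (mul_pos hlam hK) hxs) (pow_pos hA 2)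
  have key : ((β + lam * xs ^ 2) ^ 2 - lam * xs * (1 - β * γ)) * xs ^ 2
      = γ * lam * xs ^ 2 * (lam * xs ^ 3 + 2 * β * xs) + β * xs := by
    linear_combination (lam * xs ^ 3 + β * xs) * hE
  have hRpos : 0 < γ * lam * xs ^ 2 * (lam * xs ^ 3 + 2 * β * xs) + β * xs := by
    rcases hne with hb | hg
    · have hb' : 0 < β := lt_of_le_of_ne hβ (Ne.symm hb)
      have h1 : 0 ≤ γ * lam * xs ^ 2 * (lam * xs ^ 3 + 2 * β * xs) := by positivity
      linarith [h1, mul_pos hb' hxs]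
    · have hg' : 0 < γ := lt_of_le_of_ne hγ (Ne.symm hg)
      have h1 : 0 < γ * lam * xs ^ 2 * (lam * xs ^ 3 + 2 * β * xs) := by positivity
      linarith [h1, mul_nonneg hβ hxs.le]
  have hw1 : w < 1 := by
    rw [hw_def, div_lt_one (pow_pos hA 2)]
    have h2 : 0 < ((β + lam * xs ^ 2) ^ 2 - lam * xs * (1 - β * γ)) * xs ^ 2 := by
      rw [key]; exact hRpos
    rcases mul_pos_iff.mp h2 with ⟨h3, _⟩ | ⟨_, h4⟩
    · linarith
    · exact absurd (pow_pos hxs 2) (by linarith)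
  have homx : omegaFun β γ xs = w := by
    rw [hw_def]
    unfold omegaFun
    field_simp
    linear_combination (-(xs - γ) * (β + lam * xs ^ 2) ^ 2
      + lam * xs ^ 2 * ((xs - γ) * (β + lam * xs ^ 2) + 1 - β * γ)) * hE
  have habs : |omegaFun β γ xs| = w := by rw [homx]; exact abs_of_pos hw0
  have h1w : 0 < 1 - w := by linarith
  set c : ℝ := 2 * w / (1 - w) with hc_def
  have hc0 : 0 < c := div_pos (by linarith) h1w
  have hcw : c * (1 - w) = 2 * w := by rw [hc_def]; field_simp
  set Cmin : ℝ := w / 2 with hCmin_def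
  set Cmax : ℝ := w * (3 + w) / (2 * (1 + w)) with hCmax_def
  have hCmaxw : Cmax * (2 * (1 + w)) = w * (3 + w) := by
    rw [hCmax_def]; field_simp
  have hwCmax : w < Cmax := by nlinarith [hCmaxw]
  have hCmax1 : Cmax < 1 := by nlinarith [hCmaxw]
  have hCmin0 : 0 < Cmin := by rw [hCmin_def]; linarith
  have hCminw : Cmin < w := by rw [hCmin_def]; linarith
  have hHc : w * (c + 1) < c := by nlinarith [hcw]
  -- epsilons
  have hεF : 0 < min (w - Cmin) (Cmax - w) := lt_min (by linarith) (by linarith)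
  have hεH : 0 < c - w * (c + 1) := by linarith
  have hεω : 0 < Cmax - w := by linarith
  have hεD : 0 < (β + lam * xs ^ 2) / 2 := by linarith
  have hBxx : β + lam * (xs * xs) = β + lam * xs ^ 2 := by ring
  -- continuity of the various quantities
  have hFc : ContinuousAt
      (fun q : ℝ × ℝ => lam * q.1 * (1 - β * γ) / (β + lam * (q.1 * q.2)) ^ 2) (xs, xs) := by
    apply ContinuousAt.div (by fun_prop) (by fun_prop)
    show (β + lam * (xs * xs)) ^ 2 ≠ 0
    rw [hBxx]; exact pow_ne_zero 2 hAne
  have hHc2 : ContinuousAt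
      (fun q : ℝ × ℝ => lam * (1 - β * γ) / ((β + lam * (q.1 * q.2)) * (β + lam * xs ^ 2))
        * (q.1 * c + xs)) (xs, xs) := by
    apply ContinuousAt.mul _ (by fun_prop)
    apply ContinuousAt.div (by fun_prop) (by fun_prop)
    show (β + lam * (xs * xs)) * (β + lam * xs ^ 2) ≠ 0
    rw [hBxx]; exact mul_ne_zero hAne hAne
  have hDc : ContinuousAt (fun q : ℝ × ℝ => β + lam * (q.1 * q.2)) (xs, xs) := by fun_prop
  have hωc : ContinuousAt (omegaFun β γ) xs := by
    have h0 : ContinuousAt (fun R : ℝ => γ / R) xs :=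
      continuousAt_const.div continuousAt_id hxne
    have h1 : ContinuousAt (fun R : ℝ => 1 + β * γ - β * R - γ / R) xs :=
      ContinuousAt.sub (by fun_prop) h0
    exact h1.div continuousAt_const hKne
  obtain ⟨δF, hδF0, hFball⟩ :=
    Metric.continuousAt_iff.mp hFc (min (w - Cmin) (Cmax - w)) hεF
  obtain ⟨δH, hδH0, hHball⟩ :=
    Metric.continuousAt_iff.mp hHc2 (c - w * (c + 1)) hεH
  obtain ⟨δω, hδω0, hωball⟩ := Metric.continuousAt_iff.mp hωc (Cmax - w) hεω
  obtain ⟨δD, hδD0, hDball⟩ :=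
    Metric.continuousAt_iff.mp hDc ((β + lam * xs ^ 2) / 2) hεD
  set δ : ℝ := min (min δF δH) (min δω δD) with hδ_def
  have hδ0 : 0 < δ := lt_min (lt_min hδF0 hδH0) (lt_min hδω0 hδD0)
  have h1c : (0:ℝ) < 1 + c := by linarith
  refine ⟨Cmin, Cmax, min (δ / (2 * (1 + c))) (xs / (2 * (1 + c))), hCmin0,
    lt_trans hCminw hwCmax, hCmax1,
    lt_min (by positivity) (by positivity), ?_⟩
  intro τ hτ R hR p hp
  obtain ⟨hτ0, hττ⟩ := hτ
  have hhw : 2 * τ * |omegaFun β γ xs| / (1 - |omegaFun β γ xs|) = c * τ := by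
    rw [habs, hc_def]; ring
  rw [hhw] at hR ⊢
  have hRd : |R - xs| ≤ c * τ := abs_le.mpr ⟨by linarith [hR.1], by linarith [hR.2]⟩
  have hpd : |p - xs| ≤ τ := abs_le.mpr ⟨by linarith [hp.1], by linarith [hp.2]⟩
  have hτδ : (1 + c) * τ < δ / 2 := by
    have h := lt_of_lt_of_le hττ (min_le_left _ _)
    calc (1 + c) * τ < (1 + c) * (δ / (2 * (1 + c))) := by
          exact mul_lt_mul_of_pos_left h h1c
      _ = δ / 2 := by field_simp
  have hτxs : (1 + c) * τ < xs / 2 := by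
    have h := lt_of_lt_of_le hττ (min_le_right _ _)
    calc (1 + c) * τ < (1 + c) * (xs / (2 * (1 + c))) := by
          exact mul_lt_mul_of_pos_left h h1c
      _ = xs / 2 := by field_simp
  have hcτle : c * τ ≤ (1 + c) * τ :=
    mul_le_mul_of_nonneg_right (by linarith) hτ0.le
  have hτle : τ ≤ (1 + c) * τ := by
    have h := mul_le_mul_of_nonneg_right (by linarith : (1:ℝ) ≤ 1 + c) hτ0.le
    linarith
  have hRδ : |R - xs| < δ := by linarith
  have hpδ : |p - xs| < δ := by linarith
  have hdist : dist ((p, R) : ℝ × ℝ) (xs, xs) < δ := by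
    rw [Prod.dist_eq]
    apply max_lt
    · rw [Real.dist_eq]; exact hpδ
    · rw [Real.dist_eq]; exact hRδ
  have hp0 : 0 < p := by
    have h := abs_lt.mp (lt_of_le_of_lt hpd (by linarith : τ < xs / 2))
    linarith [h.1]
  have hR0 : 0 < R := by
    have h := abs_lt.mp (lt_of_le_of_lt hRd (by linarith : c * τ < xs / 2))
    linarith [h.1]
  -- denominator bound
  have hDb := hDball (lt_of_lt_of_le hdist ((min_le_right _ _).trans (min_le_right _ _)))
  simp only [Real.dist_eq] at hDb
  rw [hBxx] at hDb
  have hB0 : 0 < β + lam * (p * R) := by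
    have h := abs_lt.mp hDb
    linarith [h.1]
  have hBne : β + lam * (p * R) ≠ 0 := hB0.ne'
  -- the derivative
  have h1der : HasDerivAt (fun x : ℝ => 1 + γ * lam * (p * x)) (γ * lam * p) R := by
    have h := ((hasDerivAt_id R).const_mul (γ * lam * p)).const_add (1:ℝ)
    simpa [mul_assoc, mul_comm, mul_left_comm] using h
  have h2der : HasDerivAt (fun x : ℝ => β + lam * (p * x)) (lam * p) R := by
    have h := ((hasDerivAt_id R).const_mul (lam * p)).const_add β
    simpa [mul_assoc] using h
  have hd : HasDerivAt (phiMap β γ lam p)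
      ((γ * lam * p * (β + lam * (p * R)) - (1 + γ * lam * (p * R)) * (lam * p))
        / (β + lam * (p * R)) ^ 2) R := h1der.div h2der hBne
  have hderiv : deriv (phiMap β γ lam p) R
      = lam * p * (γ * β - 1) / (β + lam * (p * R)) ^ 2 := by
    rw [hd.deriv]; congr 1; ring
  have habsd : |deriv (phiMap β γ lam p) R|
      = lam * p * (1 - β * γ) / (β + lam * (p * R)) ^ 2 := by
    rw [hderiv, abs_div, abs_of_pos (pow_pos hB0 2),
      show lam * p * (γ * β - 1) = -(lam * p * (1 - β * γ)) by ring, abs_neg,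
      abs_of_pos (mul_pos (mul_pos hlam hp0) hK)]
  -- bound on the derivative via continuity of F
  have hFb := hFball (lt_of_lt_of_le hdist ((min_le_left _ _).trans (min_le_left _ _)))
  simp only [Real.dist_eq] at hFb
  rw [hBxx] at hFb
  have hFw : lam * xs * (1 - β * γ) / (β + lam * xs ^ 2) ^ 2 = w := by
    rw [hw_def]; ring
  rw [hFw] at hFb
  have hFb' := abs_lt.mp hFb
  have hεF1 : min (w - Cmin) (Cmax - w) ≤ w - Cmin := min_le_left _ _
  have hεF2 : min (w - Cmin) (Cmax - w) ≤ Cmax - w := min_le_right _ _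
  constructor
  · constructor
    · rw [habsd]; linarith [hFb'.1]
    · rw [habsd]; linarith [hFb'.2]
  -- omega bound
  have hωb := hωball (show dist R xs < δω by
    rw [Real.dist_eq]
    exact lt_of_lt_of_le hRδ ((min_le_right _ _).trans (min_le_left _ _)))
  constructor
  · rw [Real.dist_eq, homx] at hωb
    have h := abs_lt.mp hωb
    linarith [h.2]
  -- contraction of the interval
  · have hident : phiMap β γ lam p R - xs
        = lam * (γ * β - 1) * (p * R - xs ^ 2)
          / ((β + lam * (p * R)) * (β + lam * xs ^ 2)) := by
      unfold phiMap
      rw [div_sub' hBne, div_eq_div_iff hBne (mul_ne_zero hBne hAne)]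
      linear_combination (-(β + lam * (p * R)) ^ 2) * hE
    have habsphi : |phiMap β γ lam p R - xs|
        = lam * (1 - β * γ) / ((β + lam * (p * R)) * (β + lam * xs ^ 2)) * |p * R - xs ^ 2| := by
      rw [hident, abs_div, abs_of_pos (mul_pos hB0 hA),
        show lam * (γ * β - 1) * (p * R - xs ^ 2)
          = -((lam * (1 - β * γ)) * (p * R - xs ^ 2)) by ring, abs_neg, abs_mul,
        abs_of_pos (mul_pos hlam hK)]
      ring
    have hprod : |p * R - xs ^ 2| ≤ p * (c * τ) + xs * τ := by
      have hsplit : p * R - xs ^ 2 = p * (R - xs) + (p - xs) * xs := by ring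
      rw [hsplit]
      refine le_trans (abs_add_le _ _) ?_
      rw [abs_mul, abs_mul, abs_of_pos hp0, abs_of_pos hxs]
      have h1 := mul_le_mul_of_nonneg_left hRd hp0.le
      have h2 := mul_le_mul_of_nonneg_right hpd hxs.le
      linarith
    have hHb := hHball (lt_of_lt_of_le hdist ((min_le_left _ _).trans (min_le_right _ _)))
    simp only [Real.dist_eq] at hHb
    rw [hBxx] at hHb
    have hHval : lam * (1 - β * γ) / ((β + lam * xs ^ 2) * (β + lam * xs ^ 2))
        * (xs * c + xs) = w * (c + 1) := by
      rw [hw_def]; field_simp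
    rw [hHval] at hHb
    have hHlt : lam * (1 - β * γ) / ((β + lam * (p * R)) * (β + lam * xs ^ 2))
        * (p * c + xs) < c := by
      have h := abs_lt.mp hHb
      linarith [h.2]
    have hG0 : 0 ≤ lam * (1 - β * γ) / ((β + lam * (p * R)) * (β + lam * xs ^ 2)) :=
      le_of_lt (div_pos (mul_pos hlam hK) (mul_pos hB0 hA))
    have hfinal : |phiMap β γ lam p R - xs| ≤ c * τ := by
      rw [habsphi]
      calc lam * (1 - β * γ) / ((β + lam * (p * R)) * (β + lam * xs ^ 2)) * |p * R - xs ^ 2|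
          ≤ lam * (1 - β * γ) / ((β + lam * (p * R)) * (β + lam * xs ^ 2))
            * (p * (c * τ) + xs * τ) := mul_le_mul_of_nonneg_left hprod hG0
        _ = (lam * (1 - β * γ) / ((β + lam * (p * R)) * (β + lam * xs ^ 2))
            * (p * c + xs)) * τ := by ring
        _ ≤ c * τ := mul_le_mul_of_nonneg_right hHlt.le hτ0.le
    have h := abs_le.mp hfinal
    exact ⟨by linarith [h.1], by linarith [h.2]⟩
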